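/- arXiv:math/0602167 — 2 statements merged into one kernel-verified Lean document; each statement's English description precedes it below -/
import Mathlib

section
/- The holonomy of the ℤ₄-bundle constructed from a square root of the canonical bundle of a symplectic vector space equals the mod 4 reduction of the Maslov index; concretely: let n ≥ 1 and let U : [0,1] → M_n(ℂ) be a continuous path of unitary matrices such that U(1) = U(0)·O for some real orthogonal matrix O (so that U descends to a loop in the Lagrangian Grassmannian U(n)/O(n)). Let θ : [0,1] → ℝ be continuous with det(U(t))² = e^{iθ(t)} for all t, and let v : [0,1] → ℂ be continuous with v(t)² · det(U(t)) ∈ {1, −1} for all t. Then there is an integer m (the Maslov index of the loop) with θ(1) − θ(0) = 2πm, and v(1) = (−i)^m · v(0). -/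
/-!
STATEMENT 3: The holonomy of the ℤ₄-bundle constructed from a square root of the
canonical bundle of a symplectic vector space equals the mod 4 reduction of the
Maslov index of a loop in the Lagrangian Grassmannian `U(n)/O(n)`.
-/

open Matrix

/-- A continuous ±1-valued function on [0,1] is constant. -/
lemma pm_one_const (f : ℝ → ℂ) (hf : ContinuousOn f (Set.Icc 0 1))
    (h : ∀ t ∈ Set.Icc (0:ℝ) 1, f t = 1 ∨ f t = -1) :
    ∀ s ∈ Set.Icc (0:ℝ) 1, f s = f 0 := by
  intro s hs
  have h0 : (0:ℝ) ∈ Set.Icc (0:ℝ) 1 := by constructor <;> norm_num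
  set g : ℝ → ℝ := fun t => (f t).re with hg
  have hgc : ContinuousOn g (Set.Icc 0 1) := Complex.continuous_re.comp_continuousOn hf
  have hgval : ∀ t ∈ Set.Icc (0:ℝ) 1, g t = 1 ∨ g t = -1 := by
    intro t ht; rcases h t ht with h' | h' <;> simp [hg, h']
  have hfg : ∀ t ∈ Set.Icc (0:ℝ) 1, f t = (g t : ℂ) := by
    intro t ht; rcases h t ht with h' | h' <;> simp [hg, h']
  by_contra hne
  have hg0s : g s ≠ g 0 := fun h' => hne (by rw [hfg s hs, hfg 0 h0, h'])
  have hsub : Set.uIcc (0:ℝ) s ⊆ Set.Icc 0 1 := by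
    rw [Set.uIcc_of_le hs.1]
    exact Set.Icc_subset_Icc le_rfl hs.2
  have hiv := intermediate_value_uIcc (hgc.mono hsub)
  have h0mem : (0:ℝ) ∈ Set.uIcc (g 0) (g s) := by
    rcases hgval 0 h0 with a | a <;> rcases hgval s hs with b | b <;>
      first
        | (exact absurd (b.trans a.symm) hg0s)
        | (rw [a, b, Set.mem_uIcc]; norm_num)
  obtain ⟨t, ht, hgt⟩ := hiv h0mem
  rcases hgval t (hsub ht) with a | a <;> rw [hgt] at a <;> norm_num at a

theorem maslov_holonomy {n : ℕ} (hn : 1 ≤ n)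
    (U : ℝ → Matrix (Fin n) (Fin n) ℂ)
    (hUcont : ContinuousOn U (Set.Icc 0 1))
    (hUunitary : ∀ t ∈ Set.Icc (0:ℝ) 1, (U t)ᴴ * U t = 1)
    (O : Matrix (Fin n) (Fin n) ℝ) (hO : Oᵀ * O = 1)
    (hloop : U 1 = U 0 * O.map (Complex.ofReal))
    (θ : ℝ → ℝ) (hθcont : ContinuousOn θ (Set.Icc 0 1))
    (hθ : ∀ t ∈ Set.Icc (0:ℝ) 1, (U t).det ^ 2 = Complex.exp (Complex.I * θ t))
    (v : ℝ → ℂ) (hvcont : ContinuousOn v (Set.Icc 0 1))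
    (hv : ∀ t ∈ Set.Icc (0:ℝ) 1, v t ^ 2 * (U t).det = 1 ∨ v t ^ 2 * (U t).det = -1) :
    ∃ m : ℤ, θ 1 - θ 0 = 2 * Real.pi * m ∧ v 1 = (-Complex.I) ^ m * v 0 := by
  have h0 : (0:ℝ) ∈ Set.Icc (0:ℝ) 1 := by constructor <;> norm_num
  have h1 : (1:ℝ) ∈ Set.Icc (0:ℝ) 1 := by constructor <;> norm_num
  -- Step 1: the Maslov index m, from det(U 1)² = det(U 0)²
  have hdetO : O.det ^ 2 = 1 := by
    have h' := congrArg Matrix.det hO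
    rw [Matrix.det_mul, Matrix.det_transpose, Matrix.det_one] at h'
    nlinarith [h']
  have hmapdet : (O.map Complex.ofReal).det = (O.det : ℂ) := by
    have := RingHom.map_det (Complex.ofRealHom) O
    exact this.symm
  have hdetsq : (U 1).det ^ 2 = (U 0).det ^ 2 := by
    rw [hloop, Matrix.det_mul, hmapdet, mul_pow]
    have hc : ((O.det : ℂ)) ^ 2 = 1 := by
      rw [← Complex.ofReal_pow, hdetO, Complex.ofReal_one]
    rw [hc, mul_one]
  have hexp_eq : Complex.exp (Complex.I * θ 1) = Complex.exp (Complex.I * θ 0) := by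
    rw [← hθ 1 h1, ← hθ 0 h0, hdetsq]
  obtain ⟨m, hm⟩ := Complex.exp_eq_exp_iff_exists_int.mp hexp_eq
  have hθdiff : θ 1 - θ 0 = 2 * Real.pi * m := by
    have h2 : Complex.I * (θ 1 : ℂ) = Complex.I * ((θ 0 + 2 * Real.pi * m : ℝ) : ℂ) := by
      push_cast
      linear_combination hm
    have h3 := mul_left_cancel₀ Complex.I_ne_zero h2
    have h4 : θ 1 = θ 0 + 2 * Real.pi * m := Complex.ofReal_inj.mp h3
    linarith
  refine ⟨m, hθdiff, ?_⟩
  -- Step 2: w(t) = v(t)·exp(iθ(t)/4) satisfies w⁴ = 1, hence is locally constant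
  set w : ℝ → ℂ := fun t => v t * Complex.exp (Complex.I * θ t / 4) with hw
  have hwdef : ∀ t, w t = v t * Complex.exp (Complex.I * θ t / 4) := fun t => rfl
  have hwc : ContinuousOn w (Set.Icc 0 1) := by
    apply hvcont.mul
    apply Complex.continuous_exp.comp_continuousOn
    exact (continuousOn_const.mul (Complex.continuous_ofReal.comp_continuousOn hθcont)).div_const 4
  have hw4 : ∀ t ∈ Set.Icc (0:ℝ) 1, w t ^ 4 = 1 := by
    intro t ht
    have hexp4 : Complex.exp (Complex.I * θ t / 4) ^ 4 = Complex.exp (Complex.I * θ t) := by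
      rw [← Complex.exp_nat_mul]
      congr 1
      push_cast
      ring
    have hkey : w t ^ 4 = (v t ^ 2 * (U t).det) ^ 2 := by
      rw [hwdef, mul_pow, hexp4, ← hθ t ht]
      ring
    rcases hv t ht with h' | h' <;> rw [hkey, h'] <;> norm_num
  have hw0 : w 0 ≠ 0 := by
    intro h'
    have h4 := hw4 0 h0
    rw [h'] at h4; norm_num at h4
  -- w² is ±1 and hence constant
  have hsq : ∀ t ∈ Set.Icc (0:ℝ) 1, w t ^ 2 = 1 ∨ w t ^ 2 = -1 := by
    intro t ht
    have hz : (w t ^ 2 - 1) * (w t ^ 2 + 1) = 0 := by linear_combination hw4 t ht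
    rcases mul_eq_zero.mp hz with h' | h'
    · left; linear_combination h'
    · right; linear_combination h'
  have hsqconst := pm_one_const (fun t => w t ^ 2) (hwc.pow 2) hsq
  -- u = w/w(0) is ±1 and hence constant, so w(1) = w(0)
  set u : ℝ → ℂ := fun t => w t * (w 0)⁻¹ with hu
  have hudef : ∀ t, u t = w t * (w 0)⁻¹ := fun t => rfl
  have huval : ∀ t ∈ Set.Icc (0:ℝ) 1, u t = 1 ∨ u t = -1 := by
    intro t ht
    have hu2 : u t ^ 2 = 1 := by
      rw [hudef, mul_pow]
      have := hsqconst t ht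
      rw [this]
      field_simp
    have hz : (u t - 1) * (u t + 1) = 0 := by linear_combination hu2
    rcases mul_eq_zero.mp hz with h' | h'
    · left; linear_combination h'
    · right; linear_combination h'
  have huconst := pm_one_const u (hwc.mul continuousOn_const) huval
  have hw10 : w 1 = w 0 := by
    have h' := huconst 1 h1
    rw [hudef, hudef] at h'
    exact mul_right_cancel₀ (inv_ne_zero hw0) h'
  -- Step 3: unwind w(1) = w(0) into the holonomy formula
  have hexpI : Complex.exp ((Real.pi / 2 : ℝ) * Complex.I) = Complex.I := by
    rw [Complex.exp_mul_I, ← Complex.ofReal_cos, ← Complex.ofReal_sin,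
      Real.cos_pi_div_two, Real.sin_pi_div_two]
    simp
  have hsplit : Complex.I * (θ 1 : ℂ) / 4
      = Complex.I * (θ 0 : ℂ) / 4 + (m : ℂ) * ((Real.pi / 2 : ℝ) * Complex.I) := by
    have hc : (θ 1 : ℂ) = ((θ 0 + 2 * Real.pi * m : ℝ) : ℂ) := by
      norm_cast; linarith [hθdiff]
    rw [hc]
    push_cast
    ring
  have hE1 : Complex.exp (Complex.I * θ 1 / 4)
      = Complex.exp (Complex.I * θ 0 / 4) * Complex.I ^ m := by
    rw [hsplit, Complex.exp_add, Complex.exp_int_mul, hexpI]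
  have hE0 : Complex.exp (Complex.I * (θ 0 : ℂ) / 4) ≠ 0 := Complex.exp_ne_zero _
  have hveq : v 1 * Complex.I ^ m = v 0 := by
    apply mul_right_cancel₀ hE0
    have h' := hw10
    rw [hwdef, hwdef, hE1] at h'
    linear_combination h'
  have h6 : (-Complex.I) ^ m * Complex.I ^ m = 1 := by
    rw [← mul_zpow]
    simp [Complex.I_mul_I]
  calc v 1 = ((-Complex.I) ^ m * Complex.I ^ m) * v 1 := by rw [h6, one_mul]
    _ = (-Complex.I) ^ m * (v 1 * Complex.I ^ m) := by ring
    _ = (-Complex.I) ^ m * v 0 := by rw [hveq]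
end

section
/- Counting of Bohr–Sommerfeld points: let α < β be real numbers, let a, a₁ : [α,β] → ℝ be C¹ functions with a'(λ) > 0 for all λ ∈ [α,β], and let ε ∈ {0,1}. For each positive integer k set Σ(k) = {λ ∈ (α,β) : a(λ) + k^{−1}(a₁(λ) + επ) ∈ (2π/k)ℤ}. Then there exist a constant C > 0 and an integer K such that for all k ≥ K the set Σ(k) is finite and |card Σ(k) − (k/2π)(a(β) − a(α))| ≤ C. -/
/-!
STATEMENT 5: Counting of Bohr–Sommerfeld points: the number of solutions in `(α,β)` of
`a(λ) + k⁻¹(a₁(λ) + επ) ∈ (2π/k)ℤ` is `(k/2π)(a(β) − a(α)) + O(1)`.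
-/

open Set in
lemma int_Ioo_count (x y : ℝ) (hxy : x < y) :
    {m : ℤ | x < (m : ℝ) ∧ (m : ℝ) < y}.Finite ∧
    |({m : ℤ | x < (m : ℝ) ∧ (m : ℝ) < y}.ncard : ℝ) - (y - x)| ≤ 1 := by
  have hSeq : {m : ℤ | x < (m : ℝ) ∧ (m : ℝ) < y} = ↑(Finset.Ioo ⌊x⌋ ⌈y⌉) := by
    ext m
    simp [Int.floor_lt, Int.lt_ceil]
  have hfin : {m : ℤ | x < (m : ℝ) ∧ (m : ℝ) < y}.Finite := by
    rw [hSeq]; exact (Finset.Ioo _ _).finite_toSet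
  refine ⟨hfin, ?_⟩
  have hcard : {m : ℤ | x < (m : ℝ) ∧ (m : ℝ) < y}.ncard = (⌈y⌉ - ⌊x⌋ - 1).toNat := by
    rw [hSeq, Set.ncard_coe_finset, Int.card_Ioo]
  rw [hcard]
  have h1 : (⌊x⌋ : ℝ) ≤ x := Int.floor_le x
  have h2 : x < ⌊x⌋ + 1 := Int.lt_floor_add_one x
  have h3 : y ≤ ⌈y⌉ := Int.le_ceil y
  have h4 : (⌈y⌉ : ℝ) < y + 1 := Int.ceil_lt_add_one y
  have hn : 0 ≤ ⌈y⌉ - ⌊x⌋ - 1 := by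
    have : (⌊x⌋ : ℝ) < (⌈y⌉ : ℝ) := by linarith
    have : ⌊x⌋ < ⌈y⌉ := by exact_mod_cast this
    omega
  have hcast : (((⌈y⌉ - ⌊x⌋ - 1).toNat : ℕ) : ℝ) = ((⌈y⌉ : ℝ) - ⌊x⌋ - 1) := by
    rw [← Int.cast_natCast, Int.toNat_of_nonneg hn]; push_cast; ring
  rw [hcast, abs_le]
  constructor <;> linarith

theorem bohr_sommerfeld_counting
    (α β : ℝ) (hαβ : α < β)
    (a a₁ : ℝ → ℝ)
    (ha : ContDiffOn ℝ 1 a (Set.Icc α β))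
    (ha₁ : ContDiffOn ℝ 1 a₁ (Set.Icc α β))
    (ha' : ∀ t ∈ Set.Icc α β, 0 < derivWithin a (Set.Icc α β) t)
    (ε : ℝ) (hε : ε = 0 ∨ ε = 1) :
    ∃ C : ℝ, 0 < C ∧ ∃ K : ℕ, ∀ k : ℕ, K ≤ k →
      (let BS : Set ℝ :=
        {l ∈ Set.Ioo α β | ∃ m : ℤ, a l + (k : ℝ)⁻¹ * (a₁ l + ε * Real.pi) =
          (2 * Real.pi / k) * m};
      BS.Finite ∧
        |(BS.ncard : ℝ) - (k / (2 * Real.pi)) * (a β - a α)| ≤ C) := by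
  have hπ : (0:ℝ) < Real.pi := Real.pi_pos
  have hU : UniqueDiffOn ℝ (Set.Icc α β) := uniqueDiffOn_Icc hαβ
  have hcomp : IsCompact (Set.Icc α β) := isCompact_Icc
  have hne : (Set.Icc α β).Nonempty := Set.nonempty_Icc.2 hαβ.le
  have hda : DifferentiableOn ℝ a (Set.Icc α β) := ha.differentiableOn one_ne_zero
  have hda₁ : DifferentiableOn ℝ a₁ (Set.Icc α β) := ha₁.differentiableOn one_ne_zero
  have hca' : ContinuousOn (derivWithin a (Set.Icc α β)) (Set.Icc α β) :=
    ha.continuousOn_derivWithin hU le_rfl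
  have hca₁' : ContinuousOn (derivWithin a₁ (Set.Icc α β)) (Set.Icc α β) :=
    ha₁.continuousOn_derivWithin hU le_rfl
  obtain ⟨t₀, ht₀, hmin⟩ := hcomp.exists_isMinOn hne hca'
  set c := derivWithin a (Set.Icc α β) t₀ with hcdef
  have hc : 0 < c := ha' t₀ ht₀
  have hminle : ∀ t ∈ Set.Icc α β, c ≤ derivWithin a (Set.Icc α β) t := fun t ht => hmin ht
  obtain ⟨M, hM⟩ := hcomp.exists_bound_of_continuousOn hca₁'
  have hM0 : 0 ≤ M := le_trans (norm_nonneg _) (hM t₀ ht₀)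
  refine ⟨2 + |a₁ β - a₁ α| / (2 * Real.pi), by positivity, ⌈M / c⌉₊ + 1, fun k hk => ?_⟩
  intro BS
  have hk1 : 1 ≤ k := le_trans (Nat.le_add_left 1 _) hk
  have hk0 : (0:ℝ) < (k:ℝ) := by exact_mod_cast hk1
  have hkM : M / c < (k:ℝ) := by
    calc M / c ≤ (⌈M / c⌉₊ : ℝ) := Nat.le_ceil _
    _ < (k:ℝ) := by exact_mod_cast hk
  have hkM' : M < c * k := by
    have := (div_lt_iff₀ hc).1 hkM; linarith [this]
  -- the perturbed function
  set g : ℝ → ℝ := fun l => a l + (k : ℝ)⁻¹ * (a₁ l + ε * Real.pi) with hgdef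
  have hgc : ContinuousOn g (Set.Icc α β) := by
    apply (hda.continuousOn).add
    exact (continuousOn_const.mul ((hda₁.continuousOn).add continuousOn_const))
  -- strict monotonicity of g
  have hmono : StrictMonoOn g (Set.Icc α β) := by
    apply strictMonoOn_of_deriv_pos (convex_Icc α β) hgc
    intro t ht
    rw [interior_Icc] at ht
    have hmem : t ∈ Set.Icc α β := Set.Ioo_subset_Icc_self ht
    have hnhds : Set.Icc α β ∈ nhds t := Icc_mem_nhds ht.1 ht.2
    have hA : HasDerivAt a (derivWithin a (Set.Icc α β) t) t := by
      have := (hda t hmem).differentiableAt hnhds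
      rw [derivWithin_of_mem_nhds hnhds]
      exact this.hasDerivAt
    have hA₁ : HasDerivAt a₁ (derivWithin a₁ (Set.Icc α β) t) t := by
      have := (hda₁ t hmem).differentiableAt hnhds
      rw [derivWithin_of_mem_nhds hnhds]
      exact this.hasDerivAt
    have hG : HasDerivAt g (derivWithin a (Set.Icc α β) t
        + (k:ℝ)⁻¹ * derivWithin a₁ (Set.Icc α β) t) t :=
      hA.add (((hA₁.add_const (ε * Real.pi))).const_mul ((k:ℝ)⁻¹))
    rw [hG.deriv]
    have h1 : c ≤ derivWithin a (Set.Icc α β) t := hminle t hmem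
    have h2 : |derivWithin a₁ (Set.Icc α β) t| ≤ M := by
      have := hM t hmem; rwa [Real.norm_eq_abs] at this
    have h3 : -M ≤ derivWithin a₁ (Set.Icc α β) t := (abs_le.1 h2).1
    have h4 : (k:ℝ)⁻¹ * M < c := by
      rw [inv_mul_lt_iff₀ hk0]; linarith [hkM']
    have h5 : -((k:ℝ)⁻¹ * M) ≤ (k:ℝ)⁻¹ * derivWithin a₁ (Set.Icc α β) t := by
      rw [neg_le, ← mul_neg]
      exact mul_le_mul_of_nonneg_left (by linarith) (by positivity)
    linarith
  have hgab : g α < g β := hmono (Set.left_mem_Icc.2 hαβ.le) (Set.right_mem_Icc.2 hαβ.le) hαβ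
  -- endpoints of the integer interval
  set x := (k:ℝ) * g α / (2 * Real.pi) with hxdef
  set y := (k:ℝ) * g β / (2 * Real.pi) with hydef
  have hxy : x < y := by rw [hxdef, hydef]; gcongr
  set S : Set ℤ := {m : ℤ | x < (m : ℝ) ∧ (m : ℝ) < y} with hSdef
  obtain ⟨hSfin, hScard⟩ := int_Ioo_count x y hxy
  -- the counting map
  set F : ℝ → ℤ := fun l => round ((k:ℝ) * g l / (2 * Real.pi)) with hFdef
  have hval : ∀ (l : ℝ) (m : ℤ), g l = (2 * Real.pi / k) * m →
      (k:ℝ) * g l / (2 * Real.pi) = (m:ℝ) := by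
    intro l m hm
    rw [hm]; field_simp
  have hgmem : ∀ l ∈ Set.Ioo α β, g α < g l ∧ g l < g β := by
    intro l hl
    exact ⟨hmono (Set.left_mem_Icc.2 hαβ.le) (Set.Ioo_subset_Icc_self hl) hl.1,
      hmono (Set.Ioo_subset_Icc_self hl) (Set.right_mem_Icc.2 hαβ.le) hl.2⟩
  have hBS : BS = {l ∈ Set.Ioo α β | ∃ m : ℤ, g l = (2 * Real.pi / k) * m} := rfl
  have hmaps : Set.MapsTo F BS S := by
    intro l hl
    obtain ⟨hl1, m, hm⟩ := hl
    have hFl : F l = m := by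
      show round ((k:ℝ) * g l / (2 * Real.pi)) = m
      rw [hval l m hm, round_intCast]
    have hx' : (k:ℝ) * g α / (2 * Real.pi) < (k:ℝ) * g l / (2 * Real.pi) := by
      have h := (hgmem l hl1).1
      gcongr
    have hy' : (k:ℝ) * g l / (2 * Real.pi) < (k:ℝ) * g β / (2 * Real.pi) := by
      have h := (hgmem l hl1).2
      gcongr
    refine ⟨?_, ?_⟩ <;> rw [hFl, ← hval l m hm]
    · exact hx'
    · exact hy'
  have hinj : Set.InjOn F BS := by
    intro l₁ hl₁ l₂ hl₂ heq
    obtain ⟨hm₁, m₁, h₁⟩ := hl₁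
    obtain ⟨hm₂, m₂, h₂⟩ := hl₂
    have hF₁ : F l₁ = m₁ := by
      show round ((k:ℝ) * g l₁ / (2 * Real.pi)) = m₁
      rw [hval l₁ m₁ h₁, round_intCast]
    have hF₂ : F l₂ = m₂ := by
      show round ((k:ℝ) * g l₂ / (2 * Real.pi)) = m₂
      rw [hval l₂ m₂ h₂, round_intCast]
    have : m₁ = m₂ := by rw [← hF₁, ← hF₂, heq]
    have hg12 : g l₁ = g l₂ := by
      show a l₁ + (k:ℝ)⁻¹ * (a₁ l₁ + ε * Real.pi) = a l₂ + (k:ℝ)⁻¹ * (a₁ l₂ + ε * Real.pi)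
      rw [h₁, h₂, this]
    exact hmono.injOn (Set.Ioo_subset_Icc_self hm₁) (Set.Ioo_subset_Icc_self hm₂) hg12
  have hsurj : Set.SurjOn F BS S := by
    intro m hm
    obtain ⟨hm1, hm2⟩ := hm
    have hmem : (2 * Real.pi / k) * m ∈ Set.Ioo (g α) (g β) := by
      constructor
      · have hxe : g α = (2 * Real.pi / k) * ((k:ℝ) * g α / (2 * Real.pi)) := by
          field_simp
        rw [hxe]
        exact mul_lt_mul_of_pos_left hm1 (by positivity)
      · have hye : g β = (2 * Real.pi / k) * ((k:ℝ) * g β / (2 * Real.pi)) := by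
          field_simp
        rw [hye]
        exact mul_lt_mul_of_pos_left hm2 (by positivity)
    obtain ⟨l, hl, hgl⟩ := intermediate_value_Ioo hαβ.le hgc hmem
    refine ⟨l, ⟨hl, m, hgl⟩, ?_⟩
    show round ((k:ℝ) * g l / (2 * Real.pi)) = m
    rw [hval l m hgl, round_intCast]
  have hbij : Set.BijOn F BS S := ⟨hmaps, hinj, hsurj⟩
  have hBSfin : BS.Finite :=
    Set.Finite.of_finite_image (hSfin.subset hbij.image_eq.subset) hinj
  refine ⟨hBSfin, ?_⟩
  have hncard : BS.ncard = S.ncard := by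
    rw [← hbij.image_eq, Set.ncard_image_of_injOn hinj]
  -- final estimate
  have hyx : y - x - (k / (2 * Real.pi)) * (a β - a α) = (a₁ β - a₁ α) / (2 * Real.pi) := by
    rw [hydef, hxdef, hgdef]
    simp only
    have hkne : (k:ℝ) ≠ 0 := ne_of_gt hk0
    field_simp
    ring
  rw [hncard, hSdef]
  have habs := abs_sub_le ((({m : ℤ | x < (m:ℝ) ∧ (m:ℝ) < y}).ncard : ℝ)) (y - x)
    ((k / (2 * Real.pi)) * (a β - a α))
  have h2 : |(a₁ β - a₁ α) / (2 * Real.pi)| = |a₁ β - a₁ α| / (2 * Real.pi) := by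
    rw [abs_div, abs_of_pos (by positivity : (0:ℝ) < 2 * Real.pi)]
  rw [hyx, h2] at habs
  linarith [hScard, habs]
end
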